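/- Let f₁, f₂ ∈ O_K[x] be distinct monic irreducible polynomials all of whose roots in K̄ have strictly positive valuation, and suppose that neither f₁ nor f₂ is Eisenstein or of degree 1. Then ν_K(Res(f₁,f₂)) ≥ 4. -/

import Mathlib

open Polynomial

/-- A monic polynomial `f = x^d + a_{d-1}x^{d-1} + ⋯ + a₀ ∈ O_K[x]` is *Eisenstein*
(with respect to the valuation `v` on an algebraic closure `Kbar` of `K`) if
`ν_K(a_i) ≥ 1` for all `i < d` and `ν_K(a₀) = 1`. -/
def IsEisensteinPoly {K Kbar : Type*} [Field K] [Field Kbar] [Algebra K Kbar]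
    (v : Kbar → ℚ) (f : Polynomial K) : Prop :=
  f.Monic ∧
  (∀ i < f.natDegree, f.coeff i ≠ 0 → 1 ≤ v (algebraMap K Kbar (f.coeff i))) ∧
  f.coeff 0 ≠ 0 ∧ v (algebraMap K Kbar (f.coeff 0)) = 1

/-- The valuation of the resultant of two monic polynomials with no common root:
`ν_K(Res(f₁,f₂)) = Σ_{i,j} ν(α_i − β_j)` over the roots `α_i` of `f₁` and `β_j`
of `f₂` in `Kbar` (with multiplicity). -/
noncomputable def resultantVal {K Kbar : Type*} [Field K] [Field Kbar] [Algebra K Kbar]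
    (v : Kbar → ℚ) (f₁ f₂ : Polynomial K) : ℚ :=
  (((f₁.map (algebraMap K Kbar)).roots).map (fun α =>
    (((f₂.map (algebraMap K Kbar)).roots).map (fun β => v (α - β))).sum)).sum

section Aux

variable {K Kbar : Type*} [Field K] [Field Kbar] [Algebra K Kbar]
variable (v : Kbar → ℚ)
variable (hv_mul : ∀ x y : Kbar, x ≠ 0 → y ≠ 0 → v (x * y) = v x + v y)

include hv_mul in
lemma aux_v_one : v 1 = 0 := by
  have := hv_mul 1 1 one_ne_zero one_ne_zero
  rw [one_mul] at this; linarith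

include hv_mul in
lemma aux_v_sq_one {u : Kbar} (hu : u * u = 1) : v u = 0 := by
  have hu0 : u ≠ 0 := by rintro rfl; simp at hu
  have := hv_mul u u hu0 hu0
  rw [hu, aux_v_one v hv_mul] at this; linarith

include hv_mul in
lemma aux_v_neg {x : Kbar} (hx : x ≠ 0) : v (-x) = v x := by
  have h1 : v (-1 : Kbar) = 0 := aux_v_sq_one v hv_mul (by ring)
  have := hv_mul (-1) x (by simp) hx
  rw [neg_one_mul] at this
  rw [this, h1, zero_add]

include hv_mul in
lemma aux_v_prod (s : Multiset Kbar) (h : ∀ x ∈ s, x ≠ 0) :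
    s.prod ≠ 0 ∧ v s.prod = (s.map v).sum := by
  induction s using Multiset.induction with
  | empty => simpa using aux_v_one v hv_mul
  | cons a t ih =>
    have ha : a ≠ 0 := h a (Multiset.mem_cons_self a t)
    obtain ⟨ht0, htv⟩ := ih (fun x hx => h x (Multiset.mem_cons_of_mem hx))
    refine ⟨by rw [Multiset.prod_cons]; exact mul_ne_zero ha ht0, ?_⟩
    rw [Multiset.prod_cons, hv_mul a t.prod ha ht0, htv, Multiset.map_cons,
      Multiset.sum_cons]

variable (hv_add : ∀ x y : Kbar, x ≠ 0 → y ≠ 0 → x + y ≠ 0 → min (v x) (v y) ≤ v (x + y))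

include hv_add in
lemma aux_v_sum (c : ℚ) (s : Multiset Kbar) (h : ∀ x ∈ s, x ≠ 0 ∧ c ≤ v x)
    (hs : s.sum ≠ 0) : c ≤ v s.sum := by
  induction s using Multiset.induction with
  | empty => simp at hs
  | cons a t ih =>
    rw [Multiset.sum_cons] at hs ⊢
    obtain ⟨ha0, hac⟩ := h a (Multiset.mem_cons_self a t)
    by_cases ht : t.sum = 0
    · rw [ht, add_zero]; exact hac
    · have htc := ih (fun x hx => h x (Multiset.mem_cons_of_mem hx)) ht
      exact le_trans (le_min hac htc) (hv_add a t.sum ha0 ht hs)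

end Aux

lemma aux_key {K Kbar : Type*} [Field K] [Field Kbar] [Algebra K Kbar] [IsAlgClosure K Kbar]
    (v : Kbar → ℚ)
    (hv_mul : ∀ x y : Kbar, x ≠ 0 → y ≠ 0 → v (x * y) = v x + v y)
    (hv_add : ∀ x y : Kbar, x ≠ 0 → y ≠ 0 → x + y ≠ 0 → min (v x) (v y) ≤ v (x + y))
    (hv_gal : ∀ (σ : Kbar ≃ₐ[K] Kbar) (x : Kbar), v (σ x) = v x)
    (hv_int : ∀ x : K, x ≠ 0 → ∃ n : ℤ, v (algebraMap K Kbar x) = (n : ℚ))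
    (f : Polynomial K) (hmon : f.Monic) (hirr : Irreducible f)
    (hpos : ∀ α ∈ (f.map (algebraMap K Kbar)).roots, 0 < v α)
    (hEis : ¬ (f.Monic ∧
      (∀ i < f.natDegree, f.coeff i ≠ 0 → 1 ≤ v (algebraMap K Kbar (f.coeff i))) ∧
      f.coeff 0 ≠ 0 ∧ v (algebraMap K Kbar (f.coeff 0)) = 1))
    (hdeg : f.natDegree ≠ 1) :
    ∃ e : ℚ, 0 < e ∧ (∀ α ∈ (f.map (algebraMap K Kbar)).roots, α ≠ 0 ∧ v α = e) ∧
      2 ≤ (f.natDegree : ℚ) ∧ 2 ≤ (f.natDegree : ℚ) * e := by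
  haveI : IsAlgClosed Kbar := IsAlgClosure.isAlgClosed K
  set A := algebraMap K Kbar with hAdef
  have hA : Function.Injective A := (algebraMap K Kbar).injective
  set F := f.map A with hFdef
  set R := F.roots with hRdef
  have hFmon : F.Monic := hmon.map A
  have hd0 : 0 < f.natDegree := hirr.natDegree_pos
  have hd2 : 2 ≤ f.natDegree := by omega
  have hsplit : F.Splits :=
    IsAlgClosed.splits F
  have hcard : Multiset.card R = f.natDegree := by
    rw [hRdef]
    exact (IsAlgClosed.splits F).natDegree_eq_card_roots.symm.trans (natDegree_map _)
  -- constant coefficient is nonzero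
  have ha0 : f.coeff 0 ≠ 0 := by
    intro h0
    obtain ⟨g, hg⟩ := X_dvd_iff.mpr h0
    rcases hirr.isUnit_or_isUnit hg with h | h
    · exact Polynomial.not_isUnit_X h
    · have hg0 : g ≠ 0 := h.ne_zero
      have : f.natDegree = 1 := by
        rw [hg, natDegree_mul X_ne_zero hg0, natDegree_X,
          Polynomial.natDegree_eq_zero_of_isUnit h]
      exact hdeg this
  -- roots are nonzero
  have hroot0 : ∀ α ∈ R, α ≠ 0 := by
    intro α hα h0
    rw [h0] at hα
    have h1 : F.eval 0 = 0 := isRoot_of_mem_roots hα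
    rw [← coeff_zero_eq_eval_zero, hFdef, coeff_map] at h1
    exact ha0 (hA (by simpa using h1))
  have haev : ∀ α ∈ R, Polynomial.aeval α f = 0 := by
    intro α hα
    rw [aeval_def, ← eval_map]
    exact isRoot_of_mem_roots hα
  -- all roots have the same valuation
  obtain ⟨α₀, hα₀⟩ := Multiset.card_pos_iff_exists_mem.mp
    (by rw [hcard]; omega : 0 < Multiset.card R)
  set e := v α₀ with hedef
  have hepos : 0 < e := hpos α₀ hα₀
  have heq : ∀ α ∈ R, v α = e := by
    intro α hα
    have hmin : minpoly K α₀ = f :=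
      (minpoly.eq_of_irreducible_of_monic hirr (haev α₀ hα₀) hmon).symm
    obtain ⟨σ, hσ⟩ := minpoly.exists_algEquiv_of_root
      (Algebra.IsAlgebraic.isAlgebraic (R := K) α₀) (by rw [hmin]; exact haev α hα)
    calc v α = v (σ α) := (hv_gal σ α).symm
      _ = v α₀ := by rw [hσ]
  -- F as a product over its roots
  have hFeq : F = (R.map fun α => X - C α).prod :=
    hsplit.eq_prod_roots_of_monic hFmon
  -- valuation of constant coefficient
  have hc0 : v (A (f.coeff 0)) = (f.natDegree : ℚ) * e := by
    have h1 : A (f.coeff 0) = (R.map fun α => -α).prod := by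
      rw [← coeff_map, ← hFdef, coeff_zero_eq_eval_zero, hFeq, eval_multiset_prod,
        Multiset.map_map]
      simp
    have h2 := aux_v_prod v hv_mul (R.map fun α => -α)
      (by intro x hx
          obtain ⟨α, hα, rfl⟩ := Multiset.mem_map.mp hx
          exact neg_ne_zero.mpr (hroot0 α hα))
    rw [h1, h2.2, Multiset.map_map]
    have h3 : (R.map (v ∘ fun α => -α)) = R.map (fun _ => e) := by
      apply Multiset.map_congr rfl
      intro α hα
      simp only [Function.comp_apply]
      rw [aux_v_neg v hv_mul (hroot0 α hα), heq α hα]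
    rw [h3, Multiset.map_const', Multiset.sum_replicate, hcard, nsmul_eq_mul]
  -- the middle Eisenstein condition always holds
  have hmid : ∀ i < f.natDegree, f.coeff i ≠ 0 → 1 ≤ v (A (f.coeff i)) := by
    intro i hi hne0
    have hkle : i ≤ Multiset.card R := by omega
    have hcoeffF : A (f.coeff i) = (-1) ^ (Multiset.card R - i) *
        R.esymm (Multiset.card R - i) := by
      rw [← coeff_map, ← hFdef]
      conv_lhs => rw [hFeq]
      exact Multiset.prod_X_sub_C_coeff R hkle
    have hesne : R.esymm (Multiset.card R - i) ≠ 0 := by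
      intro h0
      rw [h0, mul_zero] at hcoeffF
      exact hne0 (hA (by simpa using hcoeffF))
    have hesv : e ≤ v (R.esymm (Multiset.card R - i)) := by
      rw [Multiset.esymm] at hesne ⊢
      refine aux_v_sum v hv_add e _ ?_ hesne
      intro x hx
      obtain ⟨T, hT, rfl⟩ := Multiset.mem_map.mp hx
      obtain ⟨hTle, hTcard⟩ := Multiset.mem_powersetCard.mp hT
      have hTne : ∀ y ∈ T, y ≠ 0 := fun y hy => hroot0 y (Multiset.mem_of_le hTle hy)
      obtain ⟨hp0, hpv⟩ := aux_v_prod v hv_mul T hTne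
      refine ⟨hp0, ?_⟩
      have h4 : (T.map v) = T.map (fun _ => e) :=
        Multiset.map_congr rfl (fun y hy => heq y (Multiset.mem_of_le hTle hy))
      rw [hpv, h4, Multiset.map_const', Multiset.sum_replicate, hTcard, nsmul_eq_mul]
      have hk1 : 1 ≤ Multiset.card R - i := by omega
      have hk1' : (1 : ℚ) ≤ ((Multiset.card R - i : ℕ) : ℚ) := by exact_mod_cast hk1
      nlinarith
    have hu : v (A (f.coeff i)) = v (R.esymm (Multiset.card R - i)) := by
      rw [hcoeffF, hv_mul _ _ (pow_ne_zero _ (neg_ne_zero.mpr one_ne_zero)) hesne,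
        aux_v_sq_one v hv_mul (u := (-1 : Kbar) ^ (Multiset.card R - i)) (by
          rw [← pow_add]
          exact Even.neg_one_pow ⟨Multiset.card R - i, rfl⟩), zero_add]
    obtain ⟨n, hn⟩ := hv_int (f.coeff i) hne0
    rw [hn] at hu ⊢
    have h5 : (0 : ℚ) < n := by rw [hu]; linarith
    have h6 : (0 : ℤ) < n := by exact_mod_cast h5
    exact_mod_cast h6
  -- valuation of constant coefficient is ≥ 2
  obtain ⟨m, hm⟩ := hv_int (f.coeff 0) ha0
  have hm1 : (1 : ℚ) ≤ m := by
    have hdpos : (0 : ℚ) < (f.natDegree : ℚ) := by exact_mod_cast hd0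
    have h1 : (0 : ℚ) < m := by rw [← hm, hc0]; positivity
    have : (0 : ℤ) < m := by exact_mod_cast h1
    exact_mod_cast this
  have hmne1 : (m : ℚ) ≠ 1 := by
    intro h
    exact hEis ⟨hmon, hmid, ha0, by rw [hm, h]⟩
  have hm2 : (2 : ℚ) ≤ m := by
    have h1 : (1 : ℤ) ≤ m := by exact_mod_cast hm1
    have h2 : (m : ℤ) ≠ 1 := by exact_mod_cast hmne1
    have : (2 : ℤ) ≤ m := by omega
    exact_mod_cast this
  exact ⟨e, hepos, fun α hα => ⟨hroot0 α hα, heq α hα⟩, by exact_mod_cast hd2,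
    by rw [← hc0, hm]; exact hm2⟩

/-- Let `K` be a field, Henselian with respect to a discrete valuation
`ν_K` with algebraically closed residue field, with fixed algebraic closure `Kbar` and
(unique, Galois-invariant) extension `v` of `ν_K`, normalized so that a uniformizer
`πK` satisfies `v πK = 1` and `v` is `ℤ`-valued on `K`.
Let `f₁, f₂ ∈ O_K[x]` be distinct monic irreducible polynomials all of whose roots in
`Kbar` have strictly positive valuation, and suppose that neither `f₁` nor `f₂` is
Eisenstein or of degree 1.  Then `ν_K(Res(f₁,f₂)) ≥ 4`. -/
theorem resultant_val_ge_four
    {K Kbar : Type*} [Field K] [Field Kbar] [Algebra K Kbar] [IsAlgClosure K Kbar]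
    (v : Kbar → ℚ)
    (hv_mul : ∀ x y : Kbar, x ≠ 0 → y ≠ 0 → v (x * y) = v x + v y)
    (hv_add : ∀ x y : Kbar, x ≠ 0 → y ≠ 0 → x + y ≠ 0 → min (v x) (v y) ≤ v (x + y))
    (hv_gal : ∀ (σ : Kbar ≃ₐ[K] Kbar) (x : Kbar), v (σ x) = v x)
    (hv_int : ∀ x : K, x ≠ 0 → ∃ n : ℤ, v (algebraMap K Kbar x) = (n : ℚ))
    (πK : K) (hπK : πK ≠ 0 ∧ v (algebraMap K Kbar πK) = 1)
    (hv_res : ∀ x : Kbar, x ≠ 0 → 0 ≤ v x →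
      ∃ η : K, x = algebraMap K Kbar η ∨ 0 < v (x - algebraMap K Kbar η))
    (f₁ f₂ : Polynomial K)
    (hmon₁ : f₁.Monic) (hmon₂ : f₂.Monic)
    (hirr₁ : Irreducible f₁) (hirr₂ : Irreducible f₂)
    (hne : f₁ ≠ f₂)
    (hcoeff₁ : ∀ n, f₁.coeff n ≠ 0 → 0 ≤ v (algebraMap K Kbar (f₁.coeff n)))
    (hcoeff₂ : ∀ n, f₂.coeff n ≠ 0 → 0 ≤ v (algebraMap K Kbar (f₂.coeff n)))
    (hpos₁ : ∀ α ∈ (f₁.map (algebraMap K Kbar)).roots, 0 < v α)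
    (hpos₂ : ∀ β ∈ (f₂.map (algebraMap K Kbar)).roots, 0 < v β)
    (hf₁ : ¬ IsEisensteinPoly v f₁) (hdeg₁ : f₁.natDegree ≠ 1)
    (hf₂ : ¬ IsEisensteinPoly v f₂) (hdeg₂ : f₂.natDegree ≠ 1) :
    4 ≤ resultantVal v f₁ f₂ := by
  haveI : IsAlgClosed Kbar := IsAlgClosure.isAlgClosed K
  obtain ⟨e₁, he₁, hR₁, hd₁, hm₁⟩ :=
    aux_key v hv_mul hv_add hv_gal hv_int f₁ hmon₁ hirr₁ hpos₁ hf₁ hdeg₁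
  obtain ⟨e₂, he₂, hR₂, hd₂, hm₂⟩ :=
    aux_key v hv_mul hv_add hv_gal hv_int f₂ hmon₂ hirr₂ hpos₂ hf₂ hdeg₂
  set R₁ := (f₁.map (algebraMap K Kbar)).roots with hR₁def
  set R₂ := (f₂.map (algebraMap K Kbar)).roots with hR₂def
  have hcard₁ : Multiset.card R₁ = f₁.natDegree :=
    (IsAlgClosed.splits _).natDegree_eq_card_roots.symm.trans (natDegree_map _)
  have hcard₂ : Multiset.card R₂ = f₂.natDegree :=
    (IsAlgClosed.splits _).natDegree_eq_card_roots.symm.trans (natDegree_map _)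
  have haev : ∀ (g : Polynomial K) (α : Kbar), α ∈ (g.map (algebraMap K Kbar)).roots →
      Polynomial.aeval α g = 0 := by
    intro g α hα
    rw [aeval_def, ← eval_map]
    exact isRoot_of_mem_roots hα
  have hdiff : ∀ α ∈ R₁, ∀ β ∈ R₂, α ≠ β := by
    intro α hα β hβ hab
    subst hab
    have h1 : f₁ = minpoly K α :=
      minpoly.eq_of_irreducible_of_monic hirr₁ (haev f₁ α hα) hmon₁
    have h2 : f₂ = minpoly K α :=
      minpoly.eq_of_irreducible_of_monic hirr₂ (haev f₂ α hβ) hmon₂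
    exact hne (h1.trans h2.symm)
  set E := min e₁ e₂ with hEdef
  have hterm : ∀ α ∈ R₁, ∀ β ∈ R₂, E ≤ v (α - β) := by
    intro α hα β hβ
    obtain ⟨hα0, hαe⟩ := hR₁ α hα
    obtain ⟨hβ0, hβe⟩ := hR₂ β hβ
    have h := hv_add α (-β) hα0 (neg_ne_zero.mpr hβ0)
      (by rw [← sub_eq_add_neg]; exact sub_ne_zero.mpr (hdiff α hα β hβ))
    rwa [aux_v_neg v hv_mul hβ0, hαe, hβe, ← sub_eq_add_neg] at h
  have hinner : ∀ α ∈ R₁,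
      (f₂.natDegree : ℚ) * E ≤ (R₂.map fun β => v (α - β)).sum := by
    intro α hα
    have hb : ∀ x ∈ R₂.map (fun β => v (α - β)), E ≤ x := by
      intro x hx
      obtain ⟨β, hβ, rfl⟩ := Multiset.mem_map.mp hx
      exact hterm α hα β hβ
    have h := Multiset.card_nsmul_le_sum hb
    rwa [Multiset.card_map, hcard₂, nsmul_eq_mul] at h
  have houter : (f₁.natDegree : ℚ) * ((f₂.natDegree : ℚ) * E) ≤ resultantVal v f₁ f₂ := by
    rw [resultantVal]
    have hb : ∀ x ∈ R₁.map (fun α => (R₂.map fun β => v (α - β)).sum),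
        (f₂.natDegree : ℚ) * E ≤ x := by
      intro x hx
      obtain ⟨α, hα, rfl⟩ := Multiset.mem_map.mp hx
      exact hinner α hα
    have h := Multiset.card_nsmul_le_sum hb
    rwa [Multiset.card_map, hcard₁, nsmul_eq_mul] at h
  refine le_trans ?_ houter
  rcases le_total e₁ e₂ with h | h
  · rw [hEdef, min_eq_left h]
    nlinarith [hm₁, hd₂, he₁, hd₁]
  · rw [hEdef, min_eq_right h]
    nlinarith [hm₂, hd₁, he₂, hd₂]
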